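/- Let G be a connected simple graph on n ≥ 2 vertices with Wiener index W(G) and maximum transmission Tr_max(G). Then DLS(G) ≤ 2(n−1)·Tr_max(G) − 2W(G). -/
import Mathlib


open Finset Matrix Polynomial

/-- The transmission `Tr(v)` of a vertex `v`: the sum of the distances from `v`
to all other vertices of the graph. -/
noncomputable def transm {n : ℕ} (G : SimpleGraph (Fin n)) (v : Fin n) : ℝ :=
  ∑ u : Fin n, (G.dist v u : ℝ)

/-- The distance Laplacian matrix `D^L(G) = Diag(Tr) - D(G)` of a graph `G`. -/
noncomputable def distLap {n : ℕ} (G : SimpleGraph (Fin n)) : Matrix (Fin n) (Fin n) ℝ :=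
  Matrix.diagonal (transm G) - Matrix.of (fun u v : Fin n => (G.dist u v : ℝ))

/-- `IsDLSpec G μ` says that `μ 0 , μ 1 , …, μ (n-1)` are exactly the eigenvalues
(with multiplicity) of the distance Laplacian matrix of `G`; combined with `Antitone μ`
this means `μ ⟨i-1,_⟩ = ∂_i^L(G)` in the usual decreasing ordering. -/
def IsDLSpec {n : ℕ} (G : SimpleGraph (Fin n)) (μ : Fin n → ℝ) : Prop :=
  (distLap G).charpoly = ∏ i : Fin n, (X - C (μ i))

/-- The Wiener index `W(G) = (1/2) ∑_v Tr(v)`. -/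
noncomputable def wiener {n : ℕ} (G : SimpleGraph (Fin n)) : ℝ :=
  (∑ v : Fin n, transm G v) / 2

/-- The maximum transmission `Tr_max(G) = max_v Tr(v)`. -/
noncomputable def trMax {n : ℕ} (G : SimpleGraph (Fin n)) : ℝ :=
  ⨆ v : Fin n, transm G v

-- eval of charpoly
lemma eval_charpoly' {m : ℕ} (A : Matrix (Fin m) (Fin m) ℝ) (c : ℝ) :
    A.charpoly.eval c = (c • (1 : Matrix (Fin m) (Fin m) ℝ) - A).det := by
  rw [Matrix.charpoly, ← Polynomial.coe_evalRingHom, RingHom.map_det]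
  congr 1
  ext i j
  by_cases h : i = j
  · subst h; simp [Matrix.charmatrix_apply_eq, Matrix.one_apply]
  · simp [Matrix.charmatrix_apply_ne _ _ _ h, Matrix.one_apply, h]

-- each μ i is a true eigenvalue
lemma hasEig {m : ℕ} (A : Matrix (Fin m) (Fin m) ℝ) (μ : Fin m → ℝ)
    (hμ : A.charpoly = ∏ i : Fin m, (X - C (μ i))) (i : Fin m) :
    Module.End.HasEigenvalue (Matrix.toLin' A) (μ i) := by
  have hdet : (μ i • (1 : Matrix (Fin m) (Fin m) ℝ) - A).det = 0 := by
    rw [← eval_charpoly', hμ]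
    simp only [eval_prod, eval_sub, eval_X, eval_C]
    exact Finset.prod_eq_zero (Finset.mem_univ i) (by ring)
  obtain ⟨x, hx0, hx⟩ := (Matrix.exists_mulVec_eq_zero_iff).2 hdet
  have hAx : A.mulVec x = μ i • x := by
    have := hx
    rw [Matrix.sub_mulVec, Matrix.smul_mulVec, Matrix.one_mulVec, sub_eq_zero] at this
    exact this.symm
  exact Module.End.hasEigenvalue_of_hasEigenvector
    ⟨Module.End.mem_eigenspace_iff.2 (by simpa [Matrix.toLin'_apply] using hAx), hx0⟩

-- trace of distLap
lemma trace_distLap {n : ℕ} (G : SimpleGraph (Fin n)) :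
    (distLap G).trace = ∑ v : Fin n, transm G v := by
  simp [distLap, Matrix.trace, Matrix.diag, SimpleGraph.dist_self]

-- sum of eigenvalues = trace
lemma sum_eig {m : ℕ} (hm : 0 < m) (A : Matrix (Fin m) (Fin m) ℝ) (μ : Fin m → ℝ)
    (hμ : A.charpoly = ∏ i : Fin m, (X - C (μ i))) :
    ∑ i : Fin m, μ i = A.trace := by
  have : Nonempty (Fin m) := ⟨⟨0, hm⟩⟩
  rw [Matrix.trace_eq_neg_charpoly_coeff, hμ]
  have := Polynomial.prod_X_sub_C_coeff_card_pred (Finset.univ : Finset (Fin m)) μ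
    (by simpa using hm)
  simp only [Finset.card_univ, Fintype.card_fin] at this
  rw [Fintype.card_fin, this, neg_neg]

-- Gershgorin bound : μ ≤ 2 * transm k for some k
lemma eig_le {n : ℕ} (G : SimpleGraph (Fin n)) (c : ℝ)
    (h : Module.End.HasEigenvalue (Matrix.toLin' (distLap G)) c) :
    ∃ k, c ≤ 2 * transm G k := by
  obtain ⟨k, hk⟩ := eigenvalue_mem_ball h
  refine ⟨k, ?_⟩
  have hdiag : distLap G k k = transm G k := by
    simp [distLap, SimpleGraph.dist_self]
  have hsum : ∑ j ∈ Finset.univ.erase k, ‖distLap G k j‖ = transm G k := by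
    have : ∀ j ∈ Finset.univ.erase k, ‖distLap G k j‖ = (G.dist k j : ℝ) := by
      intro j hj
      have hjk : j ≠ k := (Finset.mem_erase.1 hj).1
      simp [distLap, Matrix.diagonal, hjk.symm, abs_of_nonneg]
    rw [Finset.sum_congr rfl this, transm]
    exact Finset.sum_erase Finset.univ (by simp)
  rw [hdiag, hsum, Metric.mem_closedBall, Real.dist_eq] at hk
  have := abs_le.1 hk
  linarith [this.2]

-- det distLap = 0
lemma exists_eig_zero {n : ℕ} (hn : 0 < n) (G : SimpleGraph (Fin n)) (μ : Fin n → ℝ)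
    (hμ : (distLap G).charpoly = ∏ i : Fin n, (X - C (μ i))) :
    ∃ i, μ i = 0 := by
  have : Nonempty (Fin n) := ⟨⟨0, hn⟩⟩
  have hdet : (distLap G).det = 0 := by
    rw [← Matrix.exists_mulVec_eq_zero_iff]
    refine ⟨fun _ => 1, ?_, ?_⟩
    · intro h; simpa using congrFun h ⟨0, hn⟩
    · ext v
      simp [distLap, Matrix.mulVec, dotProduct, Matrix.diagonal, transm,
        Finset.sum_sub_distrib, apply_ite]
  have h0 : (distLap G).charpoly.eval 0 = 0 := by
    rw [eval_charpoly']
    simp only [zero_smul, zero_sub, Matrix.det_neg, hdet, mul_zero]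
  rw [hμ] at h0
  simp only [eval_prod, eval_sub, eval_X, eval_C, zero_sub] at h0
  obtain ⟨i, -, hi⟩ := Finset.prod_eq_zero_iff.1 h0
  exact ⟨i, by linarith [neg_eq_zero.1 hi]⟩

lemma transm_le_trMax {n : ℕ} (hn : 0 < n) (G : SimpleGraph (Fin n)) (v : Fin n) :
    transm G v ≤ ⨆ u : Fin n, transm G u := by
  have : Nonempty (Fin n) := ⟨⟨0, hn⟩⟩
  exact le_ciSup (Set.Finite.bddAbove (Set.finite_range _)) v

theorem dls_upper_wiener_trMax (n : ℕ) (hn : 2 ≤ n) (G : SimpleGraph (Fin n))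
    (hG : G.Connected) (μ : Fin n → ℝ) (hμ : IsDLSpec G μ) (hmono : Antitone μ) :
    μ ⟨0, by omega⟩ - μ ⟨n - 2, by omega⟩ ≤ 2 * ((n : ℝ) - 1) * trMax G - 2 * wiener G := by
  have hn0 : 0 < n := by omega
  set z : Fin n := ⟨0, by omega⟩
  set k : Fin n := ⟨n - 2, by omega⟩
  set l : Fin n := ⟨n - 1, by omega⟩
  set T : ℝ := trMax G with hT
  -- every eigenvalue ≤ 2T
  have hμle : ∀ i : Fin n, μ i ≤ 2 * T := by
    intro i
    obtain ⟨j, hj⟩ := eig_le G (μ i) (hasEig (distLap G) μ hμ i)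
    have := transm_le_trMax hn0 G j
    calc μ i ≤ 2 * transm G j := hj
      _ ≤ 2 * T := by rw [hT, trMax]; linarith
  -- smallest eigenvalue ≤ 0
  have hl0 : μ l ≤ 0 := by
    obtain ⟨i, hi⟩ := exists_eig_zero hn0 G μ hμ
    have : i ≤ l := by
      apply Fin.mk_le_of_le_val
      have := i.isLt; simp only [l]; omega
    calc μ l ≤ μ i := hmono this
      _ = 0 := hi
  -- sum of eigenvalues = 2 * wiener
  have hsum : ∑ i : Fin n, μ i = 2 * wiener G := by
    rw [sum_eig hn0 (distLap G) μ hμ, trace_distLap, wiener]; ring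
  -- splitting the sum
  have hlk : l ≠ k := by simp only [l, k, ne_eq, Fin.mk.injEq]; omega
  set s : Finset (Fin n) := (Finset.univ.erase k).erase l with hs
  have hlmem : l ∈ Finset.univ.erase k := Finset.mem_erase.2 ⟨hlk, Finset.mem_univ l⟩
  have hsplit : ∑ i : Fin n, μ i = μ k + (μ l + ∑ i ∈ s, μ i) := by
    rw [hs, Finset.add_sum_erase _ μ hlmem, Finset.add_sum_erase _ μ (Finset.mem_univ k)]
  have hcard : (s.card : ℝ) = (n : ℝ) - 2 := by
    rw [hs, Finset.card_erase_of_mem hlmem, Finset.card_erase_of_mem (Finset.mem_univ k),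
      Finset.card_univ, Fintype.card_fin]
    have : n - 1 - 1 = n - 2 := by omega
    rw [this, Nat.cast_sub hn]; norm_num
  have hS2 : ∑ i ∈ s, μ i ≤ ((n : ℝ) - 2) * (2 * T) := by
    have := Finset.sum_le_card_nsmul s μ (2 * T) (fun i _ => hμle i)
    rw [nsmul_eq_mul, hcard] at this
    exact this
  have hz := hμle z
  linarith [hsplit, hsum]
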